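/- Let X₁, X₂, ... be i.i.d. exponential(λ) and let x̄_n = (1/n)∑_{ℓ=1}^{n} X_ℓ. For δ ∈ (0,1), ε ∈ (0,1), τ_h ≥ (−log ε)/λ, and deviation radius r_n = √(2 τ_h² log(1/δ) / n), we have P(x̄_n − 1/λ > r_n) ≤ δ + n·ε. -/

import Mathlib

open MeasureTheory ProbabilityTheory Real Set
open scoped ENNReal

/-- Confidence-radius concentration for the empirical mean of i.i.d. exponential(λ)
variables: with r_n = √(2 τ_h² log(1/δ)/n), P(x̄_n − 1/λ > r_n) ≤ δ + n·ε. -/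

lemma ptwise_bd {lam x : ℝ} (hlam : 0 < lam) (hx : 0 < x) :
    x * (lam * rexp (-(lam*x))) ≤ (2 / rexp 1) * rexp (-(lam/2) * x) := by
  have h1 : lam * x / 2 ≤ rexp (lam*x/2 - 1) := by
    have := Real.add_one_le_exp (lam*x/2 - 1); linarith
  have h2 : rexp (lam*x/2 - 1) = rexp (lam*x/2) / rexp 1 := Real.exp_sub _ _
  have h3 : rexp (-(lam*x)) = rexp (-(lam/2)*x) / rexp (lam*x/2) := by
    rw [← Real.exp_sub]; ring_nf
  have hep : (0:ℝ) < rexp (lam*x/2) := Real.exp_pos _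
  have he1 : (0:ℝ) < rexp 1 := Real.exp_pos _
  have hrn : (0:ℝ) < rexp (-(lam/2)*x) := Real.exp_pos _
  rw [h2] at h1
  have key : lam * x ≤ 2 * rexp (lam*x/2) / rexp 1 := by
    rw [div_le_div_iff₀ (by norm_num) he1] at h1
    rw [le_div_iff₀ he1]; linarith
  calc x * (lam * rexp (-(lam*x)))
      = (lam * x) * (rexp (-(lam/2)*x) / rexp (lam*x/2)) := by rw [h3]; ring
    _ ≤ (2 * rexp (lam*x/2) / rexp 1) * (rexp (-(lam/2)*x) / rexp (lam*x/2)) := by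
        apply mul_le_mul_of_nonneg_right key (by positivity)
    _ = (2 / rexp 1) * rexp (-(lam/2) * x) := by field_simp

lemma intOn {lam : ℝ} (hlam : 0 < lam) :
    IntegrableOn (fun x => x * (lam * rexp (-(lam*x)))) (Ioi 0) := by
  apply Integrable.mono' (g := fun x => (2 / rexp 1) * rexp (-(lam/2) * x))
      ((exp_neg_integrableOn_Ioi 0 (by positivity)).const_mul _)
  · exact ((measurable_id.mul ((measurable_const.mul measurable_id).neg.exp.const_mul
      lam)).aestronglyMeasurable).restrict
  · filter_upwards [ae_restrict_mem measurableSet_Ioi] with x hx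
    have hx' : 0 < x := hx
    rw [Real.norm_eq_abs, abs_of_nonneg (mul_nonneg hx'.le (by positivity))]
    exact ptwise_bd hlam hx'

lemma intval {lam : ℝ} (hlam : 0 < lam) :
    ∫ x in Ioi 0, x * (lam * rexp (-(lam*x))) = 1 / lam := by
  have h := integral_rpow_mul_exp_neg_mul_Ioi (by norm_num : (0:ℝ) < 2) hlam
  have h2 : ∀ x : ℝ, x ^ ((2:ℝ) - 1) = x := by
    intro x; norm_num
  simp_rw [h2] at h
  calc ∫ x in Ioi 0, x * (lam * rexp (-(lam*x)))
      = lam * ∫ x in Ioi 0, x * rexp (-(lam*x)) := by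
        rw [← integral_const_mul]; congr 1; ext x; ring
    _ = lam * ((1/lam) ^ (2:ℝ) * Real.Gamma 2) := by rw [h]
    _ = 1 / lam := by
        rw [Real.Gamma_two, Real.rpow_two]
        field_simp

lemma mean_lintegral {lam : ℝ} (hlam : 0 < lam) :
    ∫⁻ x, ENNReal.ofReal x ∂(expMeasure lam) = ENNReal.ofReal (1/lam) := by
  rw [expMeasure, gammaMeasure,
    lintegral_withDensity_eq_lintegral_mul _
      (show Measurable (gammaPDF 1 lam) from (measurable_gammaPDFReal 1 lam).ennreal_ofReal)
      ENNReal.measurable_ofReal]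
  have hpt : ∀ x : ℝ, (gammaPDF 1 lam * fun x => ENNReal.ofReal x) x
      = (Ioi (0:ℝ)).indicator (fun x => ENNReal.ofReal (x * (lam * rexp (-(lam*x))))) x := by
    intro x
    simp only [Pi.mul_apply, gammaPDF_eq]
    rcases lt_trichotomy x 0 with hx | hx | hx
    · rw [if_neg (not_le.mpr hx), indicator_of_notMem (show x ∉ Ioi 0 from fun hc => absurd hc (not_lt.mpr hx.le))]
      simp
    · subst hx
      simp [indicator]
    · rw [if_pos hx.le, indicator_of_mem (mem_Ioi.mpr hx),
        ← ENNReal.ofReal_mul (by positivity)]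
      congr 1
      simp only [Real.rpow_one, Real.Gamma_one, div_one, sub_self, Real.rpow_zero, mul_one]
      ring
  rw [lintegral_congr hpt, lintegral_indicator measurableSet_Ioi _,
    ← ofReal_integral_eq_lintegral_ofReal (intOn hlam)
      (by filter_upwards [ae_restrict_mem measurableSet_Ioi] with x hx;
          exact mul_nonneg (le_of_lt hx) (by positivity)),
    intval hlam]

lemma exp_ae_nonneg {lam : ℝ} : (expMeasure lam) (Iio 0) = 0 := by
  rw [expMeasure, gammaMeasure, withDensity_apply _ measurableSet_Iio]
  exact lintegral_gammaPDF_of_nonpos le_rfl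

lemma exp_tail {lam τ : ℝ} (hlam : 0 < lam) (hτ : 0 ≤ τ) :
    (expMeasure lam) (Ioi τ) = ENNReal.ofReal (rexp (-(lam * τ))) := by
  haveI : IsProbabilityMeasure (expMeasure lam) := isProbabilityMeasure_expMeasure hlam
  have h1 : (expMeasure lam) (Iic τ) = ENNReal.ofReal (1 - rexp (-(lam * τ))) := by
    rw [← ofReal_cdf]
    congr 1
    have := cdf_expMeasure_eq hlam τ
    rw [this, if_pos hτ]
  have h2 : (Ioi τ) = (Iic τ)ᶜ := compl_Iic.symm
  rw [h2, prob_compl_eq_one_sub measurableSet_Iic, h1]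
  have he1 : rexp (-(lam * τ)) ≤ 1 :=
    Real.exp_le_one_iff.mpr (neg_nonpos_of_nonneg (by positivity))
  rw [← ENNReal.ofReal_one, ← ENNReal.ofReal_sub _ (by linarith [Real.exp_pos (-(lam * τ))])]
  congr 1
  ring

lemma integrable_id_exp {lam : ℝ} (hlam : 0 < lam) :
    Integrable (fun x : ℝ => x) (expMeasure lam) ∧ ∫ x, x ∂(expMeasure lam) = 1 / lam := by
  haveI : IsProbabilityMeasure (expMeasure lam) := isProbabilityMeasure_expMeasure hlam
  have hae : ∀ᵐ x ∂(expMeasure lam), 0 ≤ x := by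
    rw [ae_iff]
    convert exp_ae_nonneg (lam := lam) using 2
    ext x; simp [Iio]
  have hint : Integrable (fun x : ℝ => x) (expMeasure lam) := by
    refine ⟨aestronglyMeasurable_id, ?_⟩
    rw [hasFiniteIntegral_iff_norm]
    have : ∫⁻ x, ENNReal.ofReal ‖x‖ ∂(expMeasure lam)
        = ∫⁻ x, ENNReal.ofReal x ∂(expMeasure lam) := by
      apply lintegral_congr_ae
      filter_upwards [hae] with x hx
      rw [Real.norm_eq_abs, abs_of_nonneg hx]
    rw [this, mean_lintegral hlam]
    exact ENNReal.ofReal_lt_top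
  refine ⟨hint, ?_⟩
  rw [integral_eq_lintegral_of_nonneg_ae hae aestronglyMeasurable_id, mean_lintegral hlam,
    ENNReal.toReal_ofReal (by positivity)]

lemma mgf_bd {Ω : Type*} [MeasurableSpace Ω] {μ : Measure Ω} [IsProbabilityMeasure μ]
    {Z : Ω → ℝ} (hZm : Measurable Z) {c θ : ℝ} (hc : 0 < c)
    (hb : ∀ᵐ ω ∂μ, |Z ω| ≤ c) (hmean : ∫ ω, Z ω ∂μ = 0) :
    mgf Z μ θ ≤ rexp (θ^2 * c^2 / 2) := by
  have hZint : Integrable Z μ := by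
    apply Integrable.mono' (integrable_const c) hZm.aestronglyMeasurable
    filter_upwards [hb] with ω hω
    simpa using hω
  set k1 : ℝ := (rexp (θ * c) + rexp (θ * (-c))) / 2 with hk1
  set k2 : ℝ := (rexp (θ * c) - rexp (θ * (-c))) / (2 * c) with hk2
  have hae : ∀ᵐ ω ∂μ, rexp (θ * Z ω) ≤ k1 + k2 * Z ω := by
    filter_upwards [hb] with ω hω
    have h1 : -c ≤ Z ω := neg_le_of_abs_le hω
    have h2 : Z ω ≤ c := le_of_abs_le hω
    have ha0 : 0 ≤ (c - Z ω) / (2 * c) := by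
      apply div_nonneg (by linarith) (by linarith)
    have hb0 : 0 ≤ (c + Z ω) / (2 * c) := by
      apply div_nonneg (by linarith) (by linarith)
    have hab : (c - Z ω) / (2 * c) + (c + Z ω) / (2 * c) = 1 := by
      field_simp
      ring
    have hcvx := convexOn_exp.2 (Set.mem_univ (θ * (-c))) (Set.mem_univ (θ * c))
      ha0 hb0 hab
    simp only [smul_eq_mul] at hcvx
    have harg : (c - Z ω) / (2 * c) * (θ * (-c)) + (c + Z ω) / (2 * c) * (θ * c)
        = θ * Z ω := by
      field_simp
      ring
    rw [harg] at hcvx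
    refine hcvx.trans_eq ?_
    rw [hk1, hk2]
    field_simp
    ring
  have hint2 : Integrable (fun ω => k1 + k2 * Z ω) μ :=
    (integrable_const k1).add (hZint.const_mul k2)
  have h3 : mgf Z μ θ ≤ ∫ ω, (k1 + k2 * Z ω) ∂μ := by
    apply integral_mono_of_nonneg ?_ hint2 hae
    filter_upwards with ω
    exact (Real.exp_pos _).le
  have h4 : ∫ ω, (k1 + k2 * Z ω) ∂μ = k1 := by
    rw [integral_add (integrable_const k1) (hZint.const_mul k2), integral_const,
      integral_const_mul, hmean]
    simp
  have h5 : k1 = Real.cosh (θ * c) := by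
    rw [Real.cosh_eq, hk1, mul_neg]
  have h6 : Real.cosh (θ * c) ≤ rexp ((θ * c)^2 / 2) := Real.cosh_le_exp_half_sq _
  rw [h4, h5] at h3
  refine h3.trans (h6.trans_eq ?_)
  congr 1
  ring

theorem stmt_17 {Ω : Type*} [MeasurableSpace Ω] (μ : Measure Ω) [IsProbabilityMeasure μ]
    (lam : ℝ) (hlam : 0 < lam) (n : ℕ) (hn : 0 < n) (X : Fin n → Ω → ℝ)
    (hmeas : ∀ i, Measurable (X i))
    (hindep : iIndepFun X μ)
    (hdist : ∀ i, Measure.map (X i) μ = expMeasure lam)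
    (δ : ℝ) (hδ : δ ∈ Set.Ioo (0 : ℝ) 1) (ε : ℝ) (hε : ε ∈ Set.Ioo (0 : ℝ) 1)
    (τ : ℝ) (hτ : (-Real.log ε) / lam ≤ τ) :
    μ {ω | (∑ i, X i ω) / n - 1 / lam >
        Real.sqrt (2 * τ ^ 2 * Real.log (1 / δ) / n)} ≤
      ENNReal.ofReal (δ + n * ε) := by
  obtain ⟨hδ0, hδ1⟩ := hδ
  obtain ⟨hε0, hε1⟩ := hε
  set ν := expMeasure lam with hν
  haveI : IsProbabilityMeasure ν := isProbabilityMeasure_expMeasure hlam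
  have hlogε : 0 < -Real.log ε := by have := Real.log_neg hε0 hε1; linarith
  have hτpos : 0 < τ := lt_of_lt_of_le (div_pos hlogε hlam) hτ
  set L := Real.log (1 / δ) with hLdef
  have hLneg : L = -Real.log δ := by rw [hLdef, one_div, Real.log_inv]
  have hL0 : 0 < L := by rw [hLneg]; have := Real.log_neg hδ0 hδ1; linarith
  have hn' : (0:ℝ) < n := Nat.cast_pos.mpr hn
  set r := Real.sqrt (2 * τ ^ 2 * L / n) with hr
  have hr2 : r ^ 2 = 2 * τ ^ 2 * L / n := Real.sq_sqrt (by positivity)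
  have hrpos : 0 < r := Real.sqrt_pos.mpr (by positivity)
  set θ := r / τ ^ 2 with hθ
  have hθ0 : 0 ≤ θ := by positivity
  -- mean of truncation
  set m := ∫ x, min x τ ∂ν with hm
  obtain ⟨hint_id, hmean_id⟩ := integrable_id_exp hlam
  have haeν : ∀ᵐ x ∂ν, 0 ≤ x := by
    rw [ae_iff]
    convert exp_ae_nonneg (lam := lam) using 2
    ext x; simp
  have hmin_meas : Measurable (fun x : ℝ => min x τ) := measurable_id.min measurable_const
  have hint_min : Integrable (fun x : ℝ => min x τ) ν := by
    apply Integrable.mono' (integrable_const τ) hmin_meas.aestronglyMeasurable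
    filter_upwards [haeν] with x hx
    rw [Real.norm_eq_abs, abs_of_nonneg (le_min hx hτpos.le)]
    exact min_le_right _ _
  have hm_le : m ≤ 1 / lam := by
    rw [hm, ← hmean_id]
    exact integral_mono hint_min hint_id (fun x => min_le_left _ _)
  have hm0 : 0 ≤ m :=
    integral_nonneg_of_ae (by filter_upwards [haeν] with x hx; exact le_min hx hτpos.le)
  have hmτ : m ≤ τ := by
    calc m ≤ ∫ _x, τ ∂ν :=
          integral_mono hint_min (integrable_const τ) (fun x => min_le_right _ _)
      _ = τ := by simp
  -- a.e. nonneg of X i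
  have haeX : ∀ i, ∀ᵐ ω ∂μ, 0 ≤ X i ω := by
    intro i
    have h0 : μ (X i ⁻¹' (Set.Iio 0)) = 0 := by
      rw [← Measure.map_apply (hmeas i) measurableSet_Iio, hdist i]
      exact exp_ae_nonneg
    rw [ae_iff]
    convert h0 using 2
    ext ω; simp
  -- truncated centered variables
  set Z : Fin n → Ω → ℝ := fun i ω => min (X i ω) τ - m with hZ
  have hmeasZ : ∀ i, Measurable (Z i) :=
    fun i => ((hmeas i).min measurable_const).sub measurable_const
  have hZindep : iIndepFun Z μ :=
    hindep.comp (fun _ x => min x τ - m) (fun _ => hmin_meas.sub measurable_const)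
  have hZi_int : ∀ i, Integrable (fun ω => min (X i ω) τ) μ := by
    intro i
    apply Integrable.mono' (integrable_const τ)
      ((hmeas i).min measurable_const).aestronglyMeasurable
    filter_upwards [haeX i] with ω hω
    rw [Real.norm_eq_abs, abs_of_nonneg (le_min hω hτpos.le)]
    exact min_le_right _ _
  have hZmean : ∀ i, ∫ ω, Z i ω ∂μ = 0 := by
    intro i
    have h1 : ∫ ω, min (X i ω) τ ∂μ = m := by
      rw [hm, ← hdist i,
        integral_map (hmeas i).aemeasurable hmin_meas.aestronglyMeasurable]
    rw [hZ]
    simp only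
    rw [integral_sub (hZi_int i) (integrable_const m), h1, integral_const]
    simp
  have hZbd : ∀ i, ∀ᵐ ω ∂μ, |Z i ω| ≤ τ := by
    intro i
    filter_upwards [haeX i] with ω hω
    rw [hZ, abs_le]
    constructor
    · have h1 : 0 ≤ min (X i ω) τ := le_min hω hτpos.le
      simp only
      linarith
    · have h1 : min (X i ω) τ ≤ τ := min_le_right _ _
      simp only
      linarith
  have hmgf : ∀ i, mgf (Z i) μ θ ≤ rexp (θ ^ 2 * τ ^ 2 / 2) :=
    fun i => mgf_bd (hmeasZ i) hτpos (hZbd i) (hZmean i)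
  have hint_exp : ∀ i, Integrable (fun ω => rexp (θ * Z i ω)) μ := by
    intro i
    apply Integrable.mono' (integrable_const (rexp (θ * τ)))
      (((hmeasZ i).const_mul θ).exp.aestronglyMeasurable)
    filter_upwards [hZbd i] with ω hω
    rw [Real.norm_eq_abs, abs_of_pos (Real.exp_pos _)]
    exact Real.exp_le_exp.mpr
      (mul_le_mul_of_nonneg_left (le_trans (le_abs_self _) hω) hθ0)
  set S := ∑ i, Z i with hS
  set t := (n : ℝ) * r with ht
  have hSint : Integrable (fun ω => rexp (θ * S ω)) μ :=
    hZindep.integrable_exp_mul_sum hmeasZ (fun i _ => hint_exp i)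
  have hchern : (μ {ω | t ≤ S ω}).toReal ≤ rexp (-θ * t) * mgf S μ θ :=
    measure_ge_le_exp_mul_mgf t hθ0 hSint
  have hmgfS : mgf S μ θ ≤ rexp ((n : ℝ) * (θ ^ 2 * τ ^ 2 / 2)) := by
    rw [hS, hZindep.mgf_sum hmeasZ]
    calc (∏ i, mgf (Z i) μ θ) ≤ ∏ _i : Fin n, rexp (θ ^ 2 * τ ^ 2 / 2) :=
          Finset.prod_le_prod (fun i _ => mgf_nonneg) (fun i _ => hmgf i)
      _ = rexp ((n : ℝ) * (θ ^ 2 * τ ^ 2 / 2)) := by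
          rw [Finset.prod_const, Finset.card_univ, Fintype.card_fin, Real.exp_nat_mul]
  have hτ2 : (τ:ℝ) ^ 2 ≠ 0 := by positivity
  have hn0 : (n:ℝ) ≠ 0 := ne_of_gt hn'
  have hfinal : rexp (-θ * t) * rexp ((n:ℝ) * (θ ^ 2 * τ ^ 2 / 2)) = δ := by
    rw [← Real.exp_add]
    have harg : -θ * t + (n:ℝ) * (θ ^ 2 * τ ^ 2 / 2) = Real.log δ := by
      rw [hθ, ht]
      have e1 : -(r / τ ^ 2) * ((n:ℝ) * r) + (n:ℝ) * ((r / τ ^ 2) ^ 2 * τ ^ 2 / 2)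
          = -((n:ℝ) * r ^ 2 / (2 * τ ^ 2)) := by
        field_simp
        ring
      rw [e1, hr2, hLneg]
      field_simp
    rw [harg, Real.exp_log hδ0]
  have hδpart : μ {ω | t ≤ S ω} ≤ ENNReal.ofReal δ := by
    have h1 : (μ {ω | t ≤ S ω}).toReal ≤ δ := by
      refine hchern.trans ?_
      calc rexp (-θ * t) * mgf S μ θ
          ≤ rexp (-θ * t) * rexp ((n:ℝ) * (θ ^ 2 * τ ^ 2 / 2)) :=
            mul_le_mul_of_nonneg_left hmgfS (Real.exp_pos _).le
        _ = δ := hfinal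
    calc μ {ω | t ≤ S ω}
        = ENNReal.ofReal ((μ {ω | t ≤ S ω}).toReal) :=
          (ENNReal.ofReal_toReal (measure_ne_top _ _)).symm
      _ ≤ ENNReal.ofReal δ := ENNReal.ofReal_le_ofReal h1
  have hεpart : ∀ i, μ (X i ⁻¹' (Set.Ioi τ)) ≤ ENNReal.ofReal ε := by
    intro i
    rw [← Measure.map_apply (hmeas i) measurableSet_Ioi, hdist i, exp_tail hlam hτpos.le]
    apply ENNReal.ofReal_le_ofReal
    rw [← Real.exp_log hε0]
    apply Real.exp_le_exp.mpr
    have h2 : -Real.log ε ≤ τ * lam := (div_le_iff₀ hlam).mp hτ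
    linarith
  have hsub : {ω | (∑ i, X i ω) / n - 1 / lam > r}
      ⊆ (⋃ i, X i ⁻¹' (Set.Ioi τ)) ∪ {ω | t ≤ S ω} := by
    intro ω hω
    by_cases hcase : ∃ i, τ < X i ω
    · left
      obtain ⟨i, hi⟩ := hcase
      exact Set.mem_iUnion.mpr ⟨i, hi⟩
    · right
      push_neg at hcase
      have hmin : ∀ i, min (X i ω) τ = X i ω := fun i => min_eq_left (hcase i)
      have hSω : S ω = (∑ i, X i ω) - n * m := by
        rw [hS, Finset.sum_apply]
        simp only [hZ]
        rw [Finset.sum_sub_distrib]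
        congr 1
        · exact Finset.sum_congr rfl (fun i _ => hmin i)
        · rw [Finset.sum_const, Finset.card_univ, Fintype.card_fin, nsmul_eq_mul]
      have hω' : r < (∑ i, X i ω) / n - 1 / lam := hω
      have hsum : (n:ℝ) * r + (n:ℝ) * (1 / lam) < ∑ i, X i ω := by
        have h3 : r + 1 / lam < (∑ i, X i ω) / n := by linarith
        have h4 := (lt_div_iff₀ hn').mp h3
        linarith [h4]
      have hnm : (n:ℝ) * m ≤ (n:ℝ) * (1 / lam) :=
        mul_le_mul_of_nonneg_left hm_le hn'.le
      have : t ≤ S ω := by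
        rw [ht, hSω]
        linarith
      exact this
  calc μ {ω | (∑ i, X i ω) / n - 1 / lam > r}
      ≤ μ ((⋃ i, X i ⁻¹' (Set.Ioi τ)) ∪ {ω | t ≤ S ω}) := measure_mono hsub
    _ ≤ μ (⋃ i, X i ⁻¹' (Set.Ioi τ)) + μ {ω | t ≤ S ω} := measure_union_le _ _
    _ ≤ (∑ i, μ (X i ⁻¹' (Set.Ioi τ))) + ENNReal.ofReal δ :=
        add_le_add (measure_iUnion_fintype_le _ _) hδpart
    _ ≤ (∑ _i : Fin n, ENNReal.ofReal ε) + ENNReal.ofReal δ :=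
        add_le_add (Finset.sum_le_sum (fun i _ => hεpart i)) le_rfl
    _ = (n : ℝ≥0∞) * ENNReal.ofReal ε + ENNReal.ofReal δ := by
        rw [Finset.sum_const, Finset.card_univ, Fintype.card_fin, nsmul_eq_mul]
    _ = ENNReal.ofReal (δ + n * ε) := by
        rw [ENNReal.ofReal_add hδ0.le (by positivity), ENNReal.ofReal_mul (by positivity)]
        rw [ENNReal.ofReal_natCast]
        ring
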